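/- Let $a,b,c$ be positive integers and $m,n,m',n'$ arbitrary integers, and let $P$ be the $(a+1)\times(a+1)$ matrix over $\mathbb{Q}$ with entries $P_{i,j} = \binom{b+c}{c+j-i}$ for $1\le i,j\le a$; $P_{i,a+1} = \binom{n}{m-i}$ for $1\le i\le a$; $P_{a+1,j} = \binom{n'}{j-m'}$ for $1\le j\le a$; $P_{a+1,a+1} = \binom{n+n'-b-c}{m-m'-c}$. Then $\det(P) = \left(\prod_{i=1}^{a}\prod_{j=1}^{b}\prod_{k=1}^{c}\frac{i+j+k-1}{i+j+k-2}\right)\cdot\left(\binom{n+n'-b-c}{m-m'-c} - \sum_{v=1}^{a} B_{b,c,n',m'}(v)\cdot D_{b,c,n,m}(v)\right)$. -/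

import Mathlib

/-- The binomial coefficient for integer arguments, over ℚ:
`n!/((n-k)! k!)` if `0 ≤ k ≤ n`, and `0` otherwise. -/
noncomputable def ibinom (n k : ℤ) : ℚ :=
  if 0 ≤ k ∧ k ≤ n then
    (Nat.factorial n.toNat : ℚ) / (Nat.factorial (n - k).toNat * Nat.factorial k.toNat)
  else 0

/-- The entry `A(b,c,i,j)` of the lower-triangular factor. -/
noncomputable def Afun (b c i j : ℕ) : ℚ :=
  if j ≤ i ∧ i ≤ c + j then
    (Nat.factorial c * Nat.factorial (i - 1) * Nat.factorial (b + j - 1) : ℚ) /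
      (Nat.factorial (j - 1) * Nat.factorial (b + i - 1) * Nat.factorial (i - j) *
        Nat.factorial (c + j - i))
  else 0

/-- The entry `C(b,c,i,j)` of the upper-triangular factor. -/
noncomputable def Cfun (b c i j : ℕ) : ℚ :=
  if i ≤ j ∧ j ≤ b + i then
    (Nat.factorial b * Nat.factorial (j - 1) * Nat.factorial (b + c + i - 1) : ℚ) /
      (Nat.factorial (b + i - 1) * Nat.factorial (c + j - 1) * Nat.factorial (j - i) *
        Nat.factorial (b + i - j))
  else 0

/-- The entry `D(i)` (last column of the upper-triangular factor), in the
integer parameters `n, m`. -/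
noncomputable def Dfun (b c : ℕ) (n m : ℤ) (i : ℕ) : ℚ :=
  ∑ v ∈ Finset.Icc 1 i, (-1 : ℚ) ^ (i - v) *
    ((Nat.factorial (i - 1) * Nat.factorial (b + v - 1) * Nat.factorial (c + i - v - 1) : ℚ) /
      (Nat.factorial (c - 1) * Nat.factorial (v - 1) * Nat.factorial (b + i - 1) *
        Nat.factorial (i - v))) * ibinom n (m - v)

/-- The entry `B(j)` (last row of the lower-triangular factor), in the
integer parameters `n', m'`. -/
noncomputable def Bfun (b c : ℕ) (n' m' : ℤ) (j : ℕ) : ℚ :=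
  ∑ v ∈ Finset.Icc 1 j, (-1 : ℚ) ^ (j - v) *
    ((Nat.factorial (b + j - 1) * Nat.factorial (c + v - 1) * Nat.factorial (b + j - v - 1) : ℚ) /
      (Nat.factorial (b - 1) * Nat.factorial (v - 1) * Nat.factorial (j - v) *
        Nat.factorial (b + c + j - 1))) * ibinom n' (v - m')

/-- MacMahon's product formula for the number of rhombus tilings of the
semi-regular hexagon with side lengths `a, b, c`. -/
noncomputable def macmahon (a b c : ℕ) : ℚ :=
  ∏ i ∈ Finset.Icc 1 a, ∏ j ∈ Finset.Icc 1 b, ∏ k ∈ Finset.Icc 1 c,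
    (((i : ℚ) + j + k - 1) / ((i : ℚ) + j + k - 2))


open Finset Nat

lemma ibinom_neg {n k : ℤ} (hk : k < 0) : ibinom n k = 0 := by
  rw [ibinom, if_neg]; omega

lemma ibinom_eq_choose (p : ℕ) (k : ℤ) (hk : 0 ≤ k) :
    ibinom (p : ℤ) k = (p.choose k.toNat : ℚ) := by
  rw [ibinom]
  by_cases h : k ≤ (p : ℤ)
  · rw [if_pos ⟨hk, h⟩, Nat.cast_choose ℚ (show k.toNat ≤ p by omega)]
    rw [show ((p : ℤ) - k).toNat = p - k.toNat by omega, Int.toNat_natCast]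
    ring
  · rw [if_neg (by tauto), Nat.choose_eq_zero_of_lt (by omega), Nat.cast_zero]

lemma ibinom_ofNat (p q : ℕ) : ibinom (p : ℤ) (q : ℤ) = (p.choose q : ℚ) := by
  rw [ibinom_eq_choose p _ (by positivity), Int.toNat_natCast]

-- the alternating vanishing lemma
lemma altsum_key (N : ℕ) (f : ℕ → ℚ) :
    ∑ t ∈ range (N + 2), (-1 : ℚ) ^ t * ((N + 1).choose t) * f t
      = -∑ t ∈ range (N + 1), (-1 : ℚ) ^ t * (N.choose t) * (f (t + 1) - f t) := by
  rw [Finset.sum_range_succ' (fun t => (-1 : ℚ) ^ t * ((N + 1).choose t) * f t)]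
  have h1 : ∀ t, (-1 : ℚ) ^ (t + 1) * ((N + 1).choose (t + 1)) * f (t + 1)
      = -((-1 : ℚ) ^ t * (N.choose t) * f (t + 1)) - (-1) ^ t * (N.choose (t + 1)) * f (t + 1) := by
    intro t; rw [Nat.choose_succ_succ]; push_cast; ring
  rw [Finset.sum_congr rfl fun t _ => h1 t]
  have h2 : ∑ t ∈ range (N + 1), (-1 : ℚ) ^ t * (N.choose t) * f t - f 0
      = -∑ t ∈ range (N + 1), (-1 : ℚ) ^ t * (N.choose (t + 1)) * f (t + 1) := by
    rw [Finset.sum_range_succ' (fun t => (-1 : ℚ) ^ t * (N.choose t) * f t),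
      Finset.sum_range_succ (fun t => (-1 : ℚ) ^ t * (N.choose (t + 1)) * f (t + 1)),
      Nat.choose_succ_self]
    simp only [Nat.cast_zero, mul_zero, zero_mul, add_zero, pow_zero,
      Nat.choose_zero_right, Nat.cast_one, one_mul, add_sub_cancel_right]
    rw [← Finset.sum_neg_distrib]
    exact Finset.sum_congr rfl fun t _ => by ring
  have h3 : ∀ t, (-1 : ℚ) ^ t * (N.choose t) * (f (t + 1) - f t)
      = (-1 : ℚ) ^ t * (N.choose t) * f (t + 1) - (-1 : ℚ) ^ t * (N.choose t) * f t := by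
    intro t; ring
  rw [Finset.sum_congr rfl fun t _ => h3 t]
  simp only [Finset.sum_sub_distrib, Finset.sum_neg_distrib] at *
  simp only [pow_zero, Nat.choose_zero_right, Nat.cast_one, one_mul]
  linarith [h2]

lemma altsum : ∀ N r x : ℕ, r < N →
    ∑ t ∈ range (N + 1), (-1 : ℚ) ^ t * (N.choose t) * ((x + t).choose r) = 0 := by
  intro N
  induction N with
  | zero => intro r x h; omega
  | succ N ih =>
    intro r x h
    cases r with
    | zero =>
      have := @Int.alternating_sum_range_choose (N + 1)
      rw [if_neg (by omega)] at this
      have hq : ((∑ i ∈ range (N + 2), (-1 : ℤ) ^ i * ((N + 1).choose i) : ℤ) : ℚ) = 0 := by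
        rw [this]; norm_num
      push_cast at hq
      simpa using hq
    | succ r =>
      rw [show N + 1 + 1 = N + 2 from rfl, altsum_key N (fun t => ((x + t).choose (r + 1) : ℚ))]
      have h1 : ∀ t, ((x + (t + 1)).choose (r + 1) : ℚ) - ((x + t).choose (r + 1) : ℚ)
          = ((x + t).choose r : ℚ) := by
        intro t
        rw [show x + (t + 1) = (x + t) + 1 from rfl, Nat.choose_succ_succ]
        push_cast; ring
      rw [Finset.sum_congr rfl fun t _ => by rw [h1 t]]
      rw [ih r x (by omega)]
      ring

lemma ibinom_gt (p : ℕ) (k : ℤ) (hk : (p : ℤ) < k) : ibinom (p : ℤ) k = 0 := by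
  rw [ibinom_eq_choose p k (by omega), Nat.choose_eq_zero_of_lt (by omega), Nat.cast_zero]

noncomputable def Gfun (b c i j v : ℕ) : ℚ :=
  if 2 ≤ v ∧ v ≤ i ∧ i + 1 ≤ c + v ∧ v ≤ j + 1 ∧ j + 1 ≤ b + v then
    -((Nat.factorial c * Nat.factorial b * Nat.factorial (i - 1) * Nat.factorial (j - 1) *
        Nat.factorial (b + c + v - 1) : ℚ) /
      (Nat.factorial (v - 2) * Nat.factorial (b + i - 1) * Nat.factorial (c + j - 1) *
        Nat.factorial (i - v) * Nat.factorial (c + v - i - 1) * Nat.factorial (j + 1 - v) *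
        Nat.factorial (b + v - j - 1) * ((c : ℚ) + j + 1 - i) * ((c : ℚ) + j)))
  else 0

lemma Afun_zero {b c i j : ℕ} (h : ¬(j ≤ i ∧ i ≤ c + j)) : Afun b c i j = 0 := if_neg h
lemma Cfun_zero {b c i j : ℕ} (h : ¬(i ≤ j ∧ j ≤ b + i)) : Cfun b c i j = 0 := if_neg h
lemma Gfun_zero {b c i j v : ℕ}
    (h : ¬(2 ≤ v ∧ v ≤ i ∧ i + 1 ≤ c + v ∧ v ≤ j + 1 ∧ j + 1 ≤ b + v)) :
    Gfun b c i j v = 0 := if_neg h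

local notation "fq" n => (Nat.factorial n : ℚ)

lemma stepv_core (w d e g h : ℕ) :
    (h : ℚ) * (((fq (d+e)) * (fq (w+d)) * (fq (g+h+w)) / ((fq w) * (fq (g+h+w+d)) * (fq d) * (fq e))) *
        ((fq (g+h)) * (fq (w+g+1)) * (fq (g+h+d+e+w)) / ((fq (g+h+w)) * (fq (d+e+w+g+1)) * (fq (g+1)) * (fq h))))
      - (((d : ℚ)+h)/((e : ℚ)+g+1)) *
        (((fq (d+e)) * (fq (w+d)) * (fq (g+h+w)) / ((fq w) * (fq (g+h+w+d)) * (fq d) * (fq e))) *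
        ((fq (g+h)) * (fq (w+g)) * (fq (g+h+d+e+w)) / ((fq (g+h+w)) * (fq (d+e+w+g)) * (fq g) * (fq h))))
      = -((d : ℚ) * ((fq (d+e)) * (fq (g+h)) * (fq (w+d)) * (fq (w+g)) * (fq (g+h+d+e+w+1)) /
            ((fq w) * (fq (g+h+w+d)) * (fq (d+e+w+g)) * (fq d) * (fq e) * (fq g) * (fq h) * ((e:ℚ)+g+1) * ((d:ℚ)+e+w+g+1))))
        + (w : ℚ) * (e : ℚ) * (h : ℚ) * ((fq (d+e)) * (fq (g+h)) * (fq (w+d)) * (fq (w+g)) * (fq (g+h+d+e+w)) /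
            ((fq w) * (fq (g+h+w+d)) * (fq (d+e+w+g)) * (fq d) * (fq e) * (fq (g+1)) * (fq h) * ((e:ℚ)+g+1) * ((d:ℚ)+e+w+g+1))) := by
  have e1 : (fq (w+g+1)) = ((w:ℚ)+g+1) * (fq (w+g)) := by
    rw [show w+g+1 = (w+g)+1 from rfl, Nat.factorial_succ]; push_cast; ring
  have e2 : (fq (d+e+w+g+1)) = ((d:ℚ)+e+w+g+1) * (fq (d+e+w+g)) := by
    rw [show d+e+w+g+1 = (d+e+w+g)+1 from rfl, Nat.factorial_succ]; push_cast; ring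
  have e3 : (fq (g+1)) = ((g:ℚ)+1) * (fq g) := by
    rw [Nat.factorial_succ]; push_cast; ring
  have e4 : (fq (g+h+d+e+w+1)) = ((g:ℚ)+h+d+e+w+1) * (fq (g+h+d+e+w)) := by
    rw [show g+h+d+e+w+1 = (g+h+d+e+w)+1 from rfl, Nat.factorial_succ]; push_cast; ring
  rw [e1, e2, e3, e4]
  have p1 : (fq w) ≠ 0 := by positivity
  have p2 : (fq (g+h+w+d)) ≠ 0 := by positivity
  have p3 : (fq d) ≠ 0 := by positivity
  have p4 : (fq e) ≠ 0 := by positivity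
  have p5 : (fq (g+h+w)) ≠ 0 := by positivity
  have p6 : (fq (d+e+w+g)) ≠ 0 := by positivity
  have p7 : (fq g) ≠ 0 := by positivity
  have p8 : (fq h) ≠ 0 := by positivity
  have p9 : ((e:ℚ)+g+1) ≠ 0 := by positivity
  have p10 : ((d:ℚ)+e+w+g+1) ≠ 0 := by positivity
  have p11 : ((g:ℚ)+1) ≠ 0 := by positivity
  have p12 : ((w:ℚ)+g+1) ≠ 0 := by positivity
  field_simp
  ring

lemma stepv (b c i j v : ℕ) (hv : 1 ≤ v) (hvj : v ≤ j) (hband : i ≤ c + j) (hi : 1 ≤ i) :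
    Afun b c i v * Cfun b c v (j + 1)
      - (((b : ℚ) + i - j) / ((c : ℚ) + j + 1 - i)) * (Afun b c i v * Cfun b c v j)
      = Gfun b c i j (v + 1) - Gfun b c i j v := by
  by_cases h1 : v ≤ i ∧ i ≤ c + v ∧ j ≤ b + v
  case neg =>
    have hz : Afun b c i v = 0 ∨
        (Cfun b c v (j+1) = 0 ∧ Cfun b c v j = 0) := by
      by_cases hvi : v ≤ i ∧ i ≤ c + v
      · right
        constructor
        · exact Cfun_zero (by omega)
        · exact Cfun_zero (by omega)
      · left; exact Afun_zero (by omega)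
    have hg1 : Gfun b c i j (v + 1) = 0 := Gfun_zero (by omega)
    have hg0 : Gfun b c i j v = 0 := Gfun_zero (by omega)
    rw [hg1, hg0]
    rcases hz with hz | ⟨hz1, hz2⟩
    · rw [hz]; ring
    · rw [hz1, hz2]; ring
  case pos =>
    obtain ⟨h1a, h1b, h1c⟩ := h1
    obtain ⟨w, rfl⟩ : ∃ w, v = w + 1 := ⟨v - 1, by omega⟩
    obtain ⟨d, rfl⟩ : ∃ d, i = w + 1 + d := ⟨i - (w + 1), by omega⟩
    obtain ⟨g, rfl⟩ : ∃ g, j = w + 1 + g := ⟨j - (w + 1), by omega⟩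
    obtain ⟨e, rfl⟩ : ∃ e, c = d + e := ⟨c - d, by omega⟩
    obtain ⟨h, rfl⟩ : ∃ h, b = g + h := ⟨b - g, by omega⟩
    have hT0 : Afun (g+h) (d+e) (w+1+d) (w+1) * Cfun (g+h) (d+e) (w+1) (w+1+g)
        = ((Nat.factorial (d+e) : ℚ) * Nat.factorial (w+d) * Nat.factorial (g+h+w) /
            (Nat.factorial w * Nat.factorial (g+h+w+d) * Nat.factorial d * Nat.factorial e)) *
          ((Nat.factorial (g+h) : ℚ) * Nat.factorial (w+g) * Nat.factorial (g+h+d+e+w) /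
            (Nat.factorial (g+h+w) * Nat.factorial (d+e+w+g) * Nat.factorial g * Nat.factorial h)) := by
      rw [Afun, Cfun, if_pos (by omega), if_pos (by omega)]
      rw [show w+1+d-1 = w+d by omega, show g+h+(w+1)-1 = g+h+w by omega,
        show w+1-1 = w by omega, show g+h+(w+1+d)-1 = g+h+w+d by omega,
        show w+1+d-(w+1) = d by omega, show d+e+(w+1)-(w+1+d) = e by omega,
        show w+1+g-1 = w+g by omega, show g+h+(d+e)+(w+1)-1 = g+h+d+e+w by omega,
        show d+e+(w+1+g)-1 = d+e+w+g by omega, show w+1+g-(w+1) = g by omega,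
        show g+h+(w+1)-(w+1+g) = h by omega]
    have hT1 : Afun (g+h) (d+e) (w+1+d) (w+1) * Cfun (g+h) (d+e) (w+1) (w+1+g+1)
        = (h : ℚ) * (((Nat.factorial (d+e) : ℚ) * Nat.factorial (w+d) * Nat.factorial (g+h+w) /
            (Nat.factorial w * Nat.factorial (g+h+w+d) * Nat.factorial d * Nat.factorial e)) *
          ((Nat.factorial (g+h) : ℚ) * Nat.factorial (w+g+1) * Nat.factorial (g+h+d+e+w) /
            (Nat.factorial (g+h+w) * Nat.factorial (d+e+w+g+1) * Nat.factorial (g+1) *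
              Nat.factorial h))) := by
      cases h with
      | zero =>
        rw [Cfun_zero (by omega)]
        push_cast
        ring
      | succ h' =>
        rw [Afun, Cfun, if_pos (by omega), if_pos (by omega)]
        rw [show w+1+d-1 = w+d by omega, show g+(h'+1)+(w+1)-1 = g+(h'+1)+w by omega,
          show w+1-1 = w by omega, show g+(h'+1)+(w+1+d)-1 = g+(h'+1)+w+d by omega,
          show w+1+d-(w+1) = d by omega, show d+e+(w+1)-(w+1+d) = e by omega,
          show w+1+g+1-1 = w+g+1 by omega,
          show g+(h'+1)+(d+e)+(w+1)-1 = g+(h'+1)+d+e+w by omega,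
          show d+e+(w+1+g+1)-1 = d+e+w+g+1 by omega, show w+1+g+1-(w+1) = g+1 by omega,
          show g+(h'+1)+(w+1)-(w+1+g+1) = h' by omega]
        rw [show Nat.factorial (h'+1) = (h'+1) * Nat.factorial h' from Nat.factorial_succ h']
        have pf : (Nat.factorial h' : ℚ) ≠ 0 := by positivity
        have ph : ((h' : ℚ) + 1) ≠ 0 := by positivity
        push_cast
        field_simp
    have hG1 : Gfun (g+h) (d+e) (w+1+d) (w+1+g) (w+1+1)
        = -((d : ℚ) * ((Nat.factorial (d+e) : ℚ) * Nat.factorial (g+h) * Nat.factorial (w+d) *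
              Nat.factorial (w+g) * Nat.factorial (g+h+d+e+w+1) /
            (Nat.factorial w * Nat.factorial (g+h+w+d) * Nat.factorial (d+e+w+g) *
              Nat.factorial d * Nat.factorial e * Nat.factorial g * Nat.factorial h *
              ((e : ℚ)+g+1) * ((d : ℚ)+e+w+g+1)))) := by
      cases d with
      | zero =>
        rw [Gfun_zero (by omega)]
        push_cast
        ring
      | succ d' =>
        rw [Gfun, if_pos (by omega)]
        rw [show w+1+(d'+1)-1 = w+(d'+1) by omega, show w+1+g-1 = w+g by omega,
          show g+h+((d'+1)+e)+(w+1+1)-1 = g+h+(d'+1)+e+w+1 by omega,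
          show w+1+1-2 = w by omega, show g+h+(w+1+(d'+1))-1 = g+h+w+(d'+1) by omega,
          show (d'+1)+e+(w+1+g)-1 = (d'+1)+e+w+g by omega,
          show w+1+(d'+1)-(w+1+1) = d' by omega,
          show (d'+1)+e+(w+1+1)-(w+1+(d'+1))-1 = e by omega,
          show w+1+g+1-(w+1+1) = g by omega,
          show g+h+(w+1+1)-(w+1+g)-1 = h by omega]
        have hc1 : ((((d'+1)+e : ℕ) : ℚ) + ↑(w+1+g) + 1 - ↑(w+1+(d'+1))) = (e : ℚ)+g+1 := by
          push_cast; ring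
        have hc2 : ((((d'+1)+e : ℕ) : ℚ) + ↑(w+1+g)) = ((d' : ℚ)+1)+e+w+g+1 := by
          push_cast; ring
        rw [hc1, hc2]
        rw [show Nat.factorial (d'+1) = (d'+1) * Nat.factorial d' from Nat.factorial_succ d']
        have p1 : (Nat.factorial d' : ℚ) ≠ 0 := by positivity
        have p2 : ((d' : ℚ) + 1) ≠ 0 := by positivity
        have p3 : ((e : ℚ)+g+1) ≠ 0 := by positivity
        have p4 : ((d' : ℚ)+1+e+w+g+1) ≠ 0 := by positivity
        push_cast
        field_simp
    have hG0 : Gfun (g+h) (d+e) (w+1+d) (w+1+g) (w+1)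
        = -((w : ℚ) * (e : ℚ) * (h : ℚ) * ((Nat.factorial (d+e) : ℚ) * Nat.factorial (g+h) *
              Nat.factorial (w+d) * Nat.factorial (w+g) * Nat.factorial (g+h+d+e+w) /
            (Nat.factorial w * Nat.factorial (g+h+w+d) * Nat.factorial (d+e+w+g) *
              Nat.factorial d * Nat.factorial e * Nat.factorial (g+1) * Nat.factorial h *
              ((e : ℚ)+g+1) * ((d : ℚ)+e+w+g+1)))) := by
      by_cases hdeg : 1 ≤ w ∧ 1 ≤ e ∧ 1 ≤ h
      case neg =>
        rw [Gfun_zero (by omega)]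
        have : (w : ℚ) = 0 ∨ (e : ℚ) = 0 ∨ (h : ℚ) = 0 := by
          have : w = 0 ∨ e = 0 ∨ h = 0 := by omega
          rcases this with h | h | h <;> simp [h]
        rcases this with h | h | h <;> rw [h] <;> ring
      case pos =>
        obtain ⟨hw1, he1, hh1⟩ := hdeg
        obtain ⟨w', rfl⟩ : ∃ w', w = w' + 1 := ⟨w - 1, by omega⟩
        obtain ⟨e', rfl⟩ : ∃ e', e = e' + 1 := ⟨e - 1, by omega⟩
        obtain ⟨h', rfl⟩ : ∃ h'', h = h'' + 1 := ⟨h - 1, by omega⟩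
        rw [Gfun, if_pos (by omega)]
        rw [show w'+1+1+d-1 = w'+1+d by omega, show w'+1+1+g-1 = w'+1+g by omega,
          show g+(h'+1)+(d+(e'+1))+(w'+1+1)-1 = g+(h'+1)+d+(e'+1)+(w'+1) by omega,
          show w'+1+1-2 = w' by omega,
          show g+(h'+1)+(w'+1+1+d)-1 = g+(h'+1)+(w'+1)+d by omega,
          show d+(e'+1)+(w'+1+1+g)-1 = d+(e'+1)+(w'+1)+g by omega,
          show w'+1+1+d-(w'+1+1) = d by omega,
          show d+(e'+1)+(w'+1+1)-(w'+1+1+d)-1 = e' by omega,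
          show w'+1+1+g+1-(w'+1+1) = g+1 by omega,
          show g+(h'+1)+(w'+1+1)-(w'+1+1+g)-1 = h' by omega]
        have hc1 : (((d+(e'+1) : ℕ) : ℚ) + ↑(w'+1+1+g) + 1 - ↑(w'+1+1+d)) = ((e' : ℚ)+1)+g+1 := by
          push_cast; ring
        have hc2 : (((d+(e'+1) : ℕ) : ℚ) + ↑(w'+1+1+g)) = (d : ℚ)+(e'+1)+(w'+1)+g+1 := by
          push_cast; ring
        rw [hc1, hc2]
        rw [show Nat.factorial (w'+1) = (w'+1) * Nat.factorial w' from Nat.factorial_succ w',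
          show Nat.factorial (e'+1) = (e'+1) * Nat.factorial e' from Nat.factorial_succ e',
          show Nat.factorial (h'+1) = (h'+1) * Nat.factorial h' from Nat.factorial_succ h']
        have p1 : (Nat.factorial w' : ℚ) ≠ 0 := by positivity
        have p2 : (Nat.factorial e' : ℚ) ≠ 0 := by positivity
        have p3 : (Nat.factorial h' : ℚ) ≠ 0 := by positivity
        have p4 : ((e' : ℚ)+1+g+1) ≠ 0 := by positivity
        have p5 : ((d : ℚ)+(e'+1)+(w'+1)+g+1) ≠ 0 := by positivity
        push_cast
        field_simp
    rw [hT0, hT1, hG1, hG0]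
    have hc1 : (((g+h : ℕ) : ℚ) + ↑(w+1+d) - ↑(w+1+g)) = (d : ℚ) + h := by push_cast; ring
    have hc2 : (((d+e : ℕ) : ℚ) + ↑(w+1+g) + 1 - ↑(w+1+d)) = (e : ℚ)+g+1 := by push_cast; ring
    rw [hc1, hc2]
    have := stepv_core w d e g h
    linarith

lemma sum_Icc_one (j : ℕ) (f : ℕ → ℚ) : ∑ v ∈ Icc 1 j, f v = ∑ t ∈ range j, f (t + 1) := by
  rw [← Finset.Ico_add_one_right_eq_Icc, Finset.sum_Ico_eq_sum_range]
  refine Finset.sum_congr (by norm_num) fun t _ => by rw [Nat.add_comm]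

-- base case j = 1
lemma ID1_base (b c i : ℕ) (hb : 1 ≤ b) (hc : 1 ≤ c) (hi : 1 ≤ i) :
    Afun b c i 1 * Cfun b c 1 1 = ibinom ((b : ℤ) + c) ((c : ℤ) + 1 - i) := by
  by_cases hic : i ≤ c + 1
  · obtain ⟨e, he⟩ : ∃ e, c + 1 = i + e := ⟨c + 1 - i, by omega⟩
    rw [Afun, Cfun, if_pos (by omega), if_pos (by omega)]
    rw [show ((b : ℤ) + c) = ((b + c : ℕ) : ℤ) by push_cast; ring,
      show ((c : ℤ) + 1 - i) = ((e : ℕ) : ℤ) by omega, ibinom_ofNat,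
      Nat.cast_choose ℚ (show e ≤ b + c by omega)]
    rw [show b + 1 - 1 = b by omega, show (1 : ℕ) - 1 = 0 by omega,
      show c + 1 - i = e by omega, show b + c + 1 - 1 = b + c by omega,
      show c + 1 - 1 = c by omega,
      show b + c - e = b + i - 1 by omega]
    have p1 : (Nat.factorial (i - 1) : ℚ) ≠ 0 := by positivity
    have p2 : (Nat.factorial (b + i - 1) : ℚ) ≠ 0 := by positivity
    have p3 : (Nat.factorial e : ℚ) ≠ 0 := by positivity
    have p4 : (Nat.factorial b : ℚ) ≠ 0 := by positivity
    have p5 : (Nat.factorial c : ℚ) ≠ 0 := by positivity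
    simp only [Nat.factorial_zero]
    push_cast
    field_simp
  · rw [Afun_zero (by omega), ibinom_neg (by omega)]
    ring

-- boundary: the extra term
lemma ID1_boundary (b c i j : ℕ) (hb : 1 ≤ b) (hc : 1 ≤ c) (hi : 1 ≤ i) (hj : 1 ≤ j)
    (hband : i ≤ c + j) :
    Afun b c i (j + 1) * Cfun b c (j + 1) (j + 1) = -Gfun b c i j (j + 1) := by
  by_cases hij : j + 1 ≤ i
  · obtain ⟨d, rfl⟩ : ∃ d, i = j + 1 + d := ⟨i - (j + 1), by omega⟩
    obtain ⟨e, rfl⟩ : ∃ e, c = d + e + 1 := ⟨c - d - 1, by omega⟩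
    obtain ⟨γ, rfl⟩ : ∃ γ, j = γ + 1 := ⟨j - 1, by omega⟩
    rw [Afun, Cfun, Gfun, if_pos (by omega), if_pos (by omega), if_pos (by omega)]
    rw [show γ+1+1+d-1 = γ+1+d by omega, show b+(γ+1+1)-1 = b+γ+1 by omega,
      show γ+1+1-1 = γ+1 by omega, show b+(γ+1+1+d)-1 = b+γ+1+d by omega,
      show γ+1+1+d-(γ+1+1) = d by omega, show d+e+1+(γ+1+1)-(γ+1+1+d) = e+1 by omega,
      show b+(d+e+1)+(γ+1+1)-1 = b+d+e+γ+2 by omega,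
      show d+e+1+(γ+1+1)-1 = d+e+γ+2 by omega, show γ+1+1-(γ+1+1) = 0 by omega,
      show b+(γ+1+1)-(γ+1+1) = b by omega,
      show γ+1-1 = γ by omega, show γ+1+1-2 = γ by omega,
      show d+e+1+(γ+1)-1 = d+e+γ+1 by omega,
      show e+1-1 = e by omega,
      show b+(γ+1+1)-(γ+1)-1 = b by omega]
    have hc1 : (((d+e+1 : ℕ) : ℚ) + ↑(γ+1) + 1 - ↑(γ+1+1+d)) = (e : ℚ) + 1 := by
      push_cast; ring
    have hc2 : (((d+e+1 : ℕ) : ℚ) + ↑(γ+1)) = (d : ℚ)+e+γ+2 := by push_cast; ring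
    rw [hc1, hc2]
    rw [show Nat.factorial (d+e+1) = (d+e+1) * Nat.factorial (d+e) from Nat.factorial_succ _,
      show Nat.factorial (e+1) = (e+1) * Nat.factorial e from Nat.factorial_succ _,
      show Nat.factorial (d+e+γ+2) = (d+e+γ+2) * Nat.factorial (d+e+γ+1) by
        rw [show d+e+γ+2 = (d+e+γ+1)+1 by omega, Nat.factorial_succ],
      show Nat.factorial (γ+1) = (γ+1) * Nat.factorial γ from Nat.factorial_succ _]
    have p1 : (Nat.factorial (d+e) : ℚ) ≠ 0 := by positivity
    have p2 : (Nat.factorial e : ℚ) ≠ 0 := by positivity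
    have p3 : (Nat.factorial γ : ℚ) ≠ 0 := by positivity
    have p4 : (Nat.factorial (d+e+γ+1) : ℚ) ≠ 0 := by positivity
    have p5 : ((e : ℚ) + 1) ≠ 0 := by positivity
    have p6 : ((d : ℚ)+e+γ+2) ≠ 0 := by positivity
    have p7 : ((γ : ℚ)+1) ≠ 0 := by positivity
    have p8 : ((d : ℚ)+e+1) ≠ 0 := by positivity
    push_cast
    field_simp
  · rw [Afun_zero (by omega), Gfun_zero (by omega)]
    ring

-- edge case i = c + j + 1
lemma ID1_edge (b c j : ℕ) (hb : 1 ≤ b) (hc : 1 ≤ c) :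
    Afun b c (c + j + 1) (j + 1) * Cfun b c (j + 1) (j + 1) = 1 := by
  rw [Afun, Cfun, if_pos (by omega), if_pos (by omega)]
  rw [show c+j+1-1 = c+j by omega, show b+(j+1)-1 = b+j by omega,
    show j+1-1 = j by omega, show b+(c+j+1)-1 = b+c+j by omega,
    show c+j+1-(j+1) = c by omega, show c+(j+1)-(c+j+1) = 0 by omega,
    show b+c+(j+1)-1 = b+c+j by omega, show c+(j+1)-1 = c+j by omega,
    show j+1-(j+1) = 0 by omega, show b+(j+1)-(j+1) = b by omega]
  have p1 : (Nat.factorial (c+j) : ℚ) ≠ 0 := by positivity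
  have p2 : (Nat.factorial (b+j) : ℚ) ≠ 0 := by positivity
  have p3 : (Nat.factorial (b+c+j) : ℚ) ≠ 0 := by positivity
  have p4 : (Nat.factorial j : ℚ) ≠ 0 := by positivity
  have p5 : (Nat.factorial b : ℚ) ≠ 0 := by positivity
  have p6 : (Nat.factorial c : ℚ) ≠ 0 := by positivity
  simp only [Nat.factorial_zero]
  push_cast
  field_simp

-- recurrence of the RHS
lemma ID1_rhsrec (b c i j : ℕ) (hb : 1 ≤ b) (hc : 1 ≤ c) (hi : 1 ≤ i) (hj : 1 ≤ j)
    (hband : i ≤ c + j) :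
    ((b : ℚ) + i - j) * ibinom ((b : ℤ) + c) ((c : ℤ) + j - i)
      = ((c : ℚ) + j + 1 - i) * ibinom ((b : ℤ) + c) ((c : ℤ) + j + 1 - i) := by
  have hbc : ((b : ℤ) + c) = ((b + c : ℕ) : ℤ) := by push_cast; ring
  obtain ⟨k, hk⟩ : ∃ k : ℕ, (k : ℤ) = (c : ℤ) + j - i := ⟨c + j - i, by omega⟩
  by_cases hjb : j < b + i
  · have hkb : k + 1 ≤ b + c := by omega
    rw [hbc, show ((c : ℤ) + j - i) = ((k : ℕ) : ℤ) from hk.symm,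
      show ((c : ℤ) + j + 1 - i) = ((k + 1 : ℕ) : ℤ) by omega, ibinom_ofNat, ibinom_ofNat]
    have hrec := Nat.choose_succ_right_eq (b + c) k
    have hq : ((b + c).choose (k + 1) : ℚ) * (k + 1) = ((b + c).choose k : ℚ) * ((b + c - k : ℕ) : ℚ) := by
      exact_mod_cast congrArg (Nat.cast : ℕ → ℚ) hrec
    rw [show b + c - k = b + i - j by omega] at hq
    have h1 : ((b : ℚ) + i - j) = ((b + i - j : ℕ) : ℚ) := by
      rw [Nat.cast_sub (show j ≤ b + i by omega)]; push_cast; ring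
    have h2 : ((c : ℚ) + j + 1 - i) = ((k + 1 : ℕ) : ℚ) := by
      have hknat : k + 1 + i = c + j + 1 := by omega
      have := congrArg (Nat.cast : ℕ → ℚ) hknat
      push_cast at this ⊢
      linarith
    rw [h1, h2]
    push_cast at hq ⊢
    linear_combination -hq
  · by_cases hje : j = b + i
    · have h0 : ((b : ℚ) + i - j) = 0 := by subst hje; push_cast; ring
      rw [h0, hbc, ibinom_gt (b + c) ((c : ℤ) + ↑j + 1 - ↑i) (by omega)]
      ring
    · rw [hbc, ibinom_gt _ _ (by omega), ibinom_gt _ _ (by omega)]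
      ring

lemma ID1 (b c : ℕ) (hb : 1 ≤ b) (hc : 1 ≤ c) :
    ∀ j, 1 ≤ j → ∀ i, 1 ≤ i →
      ∑ v ∈ Icc 1 j, Afun b c i v * Cfun b c v j
        = ibinom ((b : ℤ) + c) ((c : ℤ) + j - i) := by
  intro j
  induction j with
  | zero => omega
  | succ j ih =>
    intro _ i hi
    have hsplit : ∑ v ∈ Icc 1 (j+1), Afun b c i v * Cfun b c v (j+1)
        = ∑ v ∈ Icc 1 j, Afun b c i v * Cfun b c v (j+1)
          + Afun b c i (j+1) * Cfun b c (j+1) (j+1) := by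
      rw [← Finset.Ico_add_one_right_eq_Icc, Finset.sum_Ico_succ_top (by omega), Finset.Ico_add_one_right_eq_Icc]
    by_cases hj0 : j = 0
    · subst hj0
      rw [hsplit]
      have h0 : ∑ v ∈ Icc 1 0, Afun b c i v * Cfun b c v 1 = 0 := by simp
      rw [h0, zero_add]
      have := ID1_base b c i hb hc hi
      rw [this]
      norm_num
    · have hj1 : 1 ≤ j := by omega
      by_cases hband : i ≤ c + j
      · have hstep : ∀ v ∈ Icc 1 j,
            Afun b c i v * Cfun b c v (j + 1)
              - (((b : ℚ) + i - j) / ((c : ℚ) + j + 1 - i)) * (Afun b c i v * Cfun b c v j)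
              = Gfun b c i j (v + 1) - Gfun b c i j v := by
          intro v hv
          rw [Finset.mem_Icc] at hv
          exact stepv b c i j v hv.1 hv.2 hband hi
        have htele : ∑ v ∈ Icc 1 j, (Gfun b c i j (v+1) - Gfun b c i j v)
            = Gfun b c i j (j+1) - Gfun b c i j 1 :=
          (sum_Icc_one j _).trans (Finset.sum_range_sub (fun v => Gfun b c i j (v+1)) j)
        have hG1 : Gfun b c i j 1 = 0 := Gfun_zero (by omega)
        have hsum : ∑ v ∈ Icc 1 j, Afun b c i v * Cfun b c v (j + 1)
            - (((b : ℚ) + i - j) / ((c : ℚ) + j + 1 - i))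
              * ∑ v ∈ Icc 1 j, Afun b c i v * Cfun b c v j
            = Gfun b c i j (j+1) := by
          rw [Finset.mul_sum, ← Finset.sum_sub_distrib]
          rw [Finset.sum_congr rfl hstep, htele, hG1, sub_zero]
        have hpos : ((c : ℚ) + j + 1 - i) ≠ 0 := by
          have : (i : ℚ) ≤ (c : ℚ) + j := by exact_mod_cast hband
          nlinarith
        have hlam : (((b : ℚ) + i - j) / ((c : ℚ) + j + 1 - i))
              * ibinom ((b : ℤ) + c) ((c : ℤ) + j - i)
            = ibinom ((b : ℤ) + c) ((c : ℤ) + j + 1 - i) := by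
          have := ID1_rhsrec b c i j hb hc hi hj1 hband
          field_simp
          linarith [this]
        rw [hsplit, ID1_boundary b c i j hb hc hi hj1 hband]
        have := hsum
        rw [ih hj1 i hi] at this
        rw [show ((c : ℤ) + ↑(j+1) - ↑i) = ((c : ℤ) + ↑j + 1 - ↑i) by push_cast; ring]
        rw [← hlam]
        linarith [this]
      · by_cases hedge : i = c + j + 1
        · subst hedge
          rw [hsplit]
          have h0 : ∑ v ∈ Icc 1 j, Afun b c (c+j+1) v * Cfun b c v (j+1) = 0 := by
            apply Finset.sum_eq_zero
            intro v hv
            rw [Finset.mem_Icc] at hv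
            rw [Afun_zero (by omega)]
            ring
          rw [h0, zero_add, ID1_edge b c j hb hc]
          rw [show ((c : ℤ) + ↑(j+1) - ↑(c+j+1)) = ((0 : ℕ) : ℤ) by push_cast; ring,
            show ((b : ℤ) + c) = ((b + c : ℕ) : ℤ) by push_cast; ring, ibinom_ofNat]
          simp
        · have hbig : c + j + 1 < i := by omega
          have h0 : ∑ v ∈ Icc 1 (j+1), Afun b c i v * Cfun b c v (j+1) = 0 := by
            apply Finset.sum_eq_zero
            intro v hv
            rw [Finset.mem_Icc] at hv
            rw [Afun_zero (by omega)]
            ring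
          rw [h0, ibinom_neg (by omega)]

noncomputable def dQ (b c i v : ℕ) : ℚ :=
  (-1 : ℚ) ^ (i - v) *
    ((Nat.factorial (i - 1) * Nat.factorial (b + v - 1) * Nat.factorial (c + i - v - 1) : ℚ) /
      (Nat.factorial (c - 1) * Nat.factorial (v - 1) * Nat.factorial (b + i - 1) *
        Nat.factorial (i - v)))

noncomputable def bQ (b c j v : ℕ) : ℚ :=
  (-1 : ℚ) ^ (j - v) *
    ((Nat.factorial (b + j - 1) * Nat.factorial (c + v - 1) * Nat.factorial (b + j - v - 1) : ℚ) /
      (Nat.factorial (b - 1) * Nat.factorial (v - 1) * Nat.factorial (j - v) *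
        Nat.factorial (b + c + j - 1)))

lemma ID2_diag (b c i : ℕ) (hb : 1 ≤ b) (hc : 1 ≤ c) (hi : 1 ≤ i) :
    Afun b c i i * dQ b c i i = 1 := by
  rw [Afun, if_pos (by omega), dQ]
  rw [show c + i - i - 1 = c - 1 by omega, show i - i = 0 by omega, show c + i - i = c by omega]
  have p1 : (Nat.factorial (i-1) : ℚ) ≠ 0 := by positivity
  have p2 : (Nat.factorial (b+i-1) : ℚ) ≠ 0 := by positivity
  have p3 : (Nat.factorial c : ℚ) ≠ 0 := by positivity
  have p4 : (Nat.factorial (c-1) : ℚ) ≠ 0 := by positivity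
  simp only [Nat.factorial_zero]
  push_cast
  field_simp

lemma ID2_term (b c w t s N : ℕ) (hb : 1 ≤ b) (hc : 1 ≤ c) (hN : t + s = N) (hN1 : 1 ≤ N) :
    Afun b c (w+1+N) (w+1+t) * dQ b c (w+1+t) (w+1)
      = (Nat.factorial c * Nat.factorial (w+N) * Nat.factorial (b+w) : ℚ) /
          (Nat.factorial (b+w+N) * Nat.factorial (c-1) * Nat.factorial w * N)
        * ((-1:ℚ)^t * (N.choose t) * ((c-1+t).choose (N-1))) := by
  subst hN
  by_cases hg : s ≤ c
  case neg =>
    rw [Afun_zero (by omega), Nat.choose_eq_zero_of_lt (show c-1+t < t+s-1 by omega)]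
    push_cast
    ring
  case pos =>
    obtain ⟨σ, rfl⟩ : ∃ σ, c = s + σ := ⟨c - s, by omega⟩
    rcases s with _ | s'
    · -- s = 0 : k = i (diagonal-ish term), t ≥ 1
      obtain ⟨t', rfl⟩ : ∃ t', t = t' + 1 := ⟨t - 1, by omega⟩
      obtain ⟨σ', rfl⟩ : ∃ σ', σ = σ' + 1 := ⟨σ - 1, by omega⟩
      rw [Afun, if_pos (by omega), dQ]
      rw [show w+1+(t'+1)-1 = w+t'+1 by omega,
        show 0+(σ'+1)+(w+1+(t'+1))-(w+1+(t'+1)) = σ'+1 by omega,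
        show w+1+(t'+1)-(w+1+(t'+1)) = 0 by omega,
        show b+(w+1+(t'+1))-1 = b+w+t'+1 by omega,
        show b+(w+1)-1 = b+w by omega,
        show 0+(σ'+1)+(w+1+(t'+1))-(w+1)-1 = σ'+t'+1 by omega,
        show 0+(σ'+1)-1 = σ' by omega,
        show w+1-1 = w by omega,
        show w+1+(t'+1)-(w+1) = t'+1 by omega]
      rw [show (0+(σ'+1)) = σ'+1 by omega, show w+(t'+1+0) = w+t'+1 by omega,
        show b+w+(t'+1+0) = b+w+t'+1 by omega, show (t'+1+0) = t'+1 by omega,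
        show t'+1-1 = t' by omega, show σ'+(t'+1) = σ'+t'+1 by omega]
      rw [Nat.choose_self, Nat.cast_choose ℚ (show t' ≤ σ'+t'+1 by omega)]
      rw [show σ'+t'+1-t' = σ'+1 by omega]

      rw [show ((t'+1 : ℕ) : ℚ) = ((t':ℚ)+1) by push_cast; ring]
      rw [show (Nat.factorial (σ'+1) : ℚ) = ((σ':ℚ)+1) * Nat.factorial σ' by
          rw [Nat.factorial_succ]; push_cast; ring,
        show (Nat.factorial (t'+1) : ℚ) = ((t':ℚ)+1) * Nat.factorial t' by
          rw [Nat.factorial_succ]; push_cast; ring,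
        show (Nat.factorial (σ'+t'+1) : ℚ) = ((σ':ℚ)+t'+1) * Nat.factorial (σ'+t') by
          rw [show σ'+t'+1 = (σ'+t')+1 by omega, Nat.factorial_succ]; push_cast; ring]
      have p1 : (Nat.factorial σ' : ℚ) ≠ 0 := by positivity
      have p2 : (Nat.factorial t' : ℚ) ≠ 0 := by positivity
      have p3 : (Nat.factorial w : ℚ) ≠ 0 := by positivity
      have p4 : (Nat.factorial (w+t'+1) : ℚ) ≠ 0 := by positivity
      have p5 : (Nat.factorial (b+w) : ℚ) ≠ 0 := by positivity
      have p6 : (Nat.factorial (b+w+t'+1) : ℚ) ≠ 0 := by positivity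
      have p7 : (Nat.factorial (σ'+t') : ℚ) ≠ 0 := by positivity
      field_simp
      ring
    · -- s = s' + 1 : off-diagonal
      rw [Afun, if_pos (by omega), dQ]
      rw [show w+1+(t+(s'+1))-1 = w+t+s'+1 by omega,
        show b+(w+1+t)-1 = b+w+t by omega,
        show w+1+t-1 = w+t by omega,
        show b+(w+1+(t+(s'+1)))-1 = b+w+t+s'+1 by omega,
        show w+1+(t+(s'+1))-(w+1+t) = s'+1 by omega,
        show s'+1+σ+(w+1+t)-(w+1+(t+(s'+1))) = σ by omega,
        show b+(w+1)-1 = b+w by omega,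
        show s'+1+σ+(w+1+t)-(w+1)-1 = s'+σ+t by omega,
        show s'+1+σ-1 = s'+σ by omega,
        show w+1-1 = w by omega,
        show w+1+t-(w+1) = t by omega]
      rw [Nat.cast_choose ℚ (show t ≤ t+(s'+1) by omega),
        Nat.cast_choose ℚ (show t+(s'+1)-1 ≤ s'+σ+t by omega)]
      rw [show t+(s'+1)-t = s'+1 by omega, show t+(s'+1)-1 = t+s' by omega,
        show s'+σ+t-(t+s') = σ by omega]
      rw [show w+(t+(s'+1)) = w+t+s'+1 by omega, show b+w+(t+(s'+1)) = b+w+t+s'+1 by omega,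
        show ((t+(s'+1) : ℕ) : ℚ) = ((t:ℚ)+s'+1) by push_cast; ring]
      rw [show (Nat.factorial (t+(s'+1)) : ℚ) = ((t:ℚ)+s'+1) * Nat.factorial (t+s') by
          rw [show t+(s'+1) = (t+s')+1 by omega, Nat.factorial_succ]; push_cast; ring,
        show (Nat.factorial (s'+1) : ℚ) = ((s':ℚ)+1) * Nat.factorial s' by
          rw [Nat.factorial_succ]; push_cast; ring,
        show (Nat.factorial (s'+1+σ) : ℚ) = ((s':ℚ)+σ+1) * Nat.factorial (s'+σ) by
          rw [show s'+1+σ = (s'+σ)+1 by omega, Nat.factorial_succ]; push_cast; ring,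
        show (Nat.factorial (w+t+s'+1) : ℚ) = ((w:ℚ)+t+s'+1) * Nat.factorial (w+t+s') by
          rw [show w+t+s'+1 = (w+t+s')+1 by omega, Nat.factorial_succ]; push_cast; ring,
        show (Nat.factorial (b+w+t+s'+1) : ℚ) = ((b:ℚ)+w+t+s'+1) * Nat.factorial (b+w+t+s') by
          rw [show b+w+t+s'+1 = (b+w+t+s')+1 by omega, Nat.factorial_succ]; push_cast; ring]
      have p1 : (Nat.factorial s' : ℚ) ≠ 0 := by positivity
      have p2 : (Nat.factorial t : ℚ) ≠ 0 := by positivity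
      have p3 : (Nat.factorial w : ℚ) ≠ 0 := by positivity
      have p4 : (Nat.factorial σ : ℚ) ≠ 0 := by positivity
      have p5 : (Nat.factorial (s'+σ) : ℚ) ≠ 0 := by positivity
      have p6 : (Nat.factorial (t+s') : ℚ) ≠ 0 := by positivity
      have p7 : (Nat.factorial (w+t) : ℚ) ≠ 0 := by positivity
      have p8 : (Nat.factorial (b+w+t) : ℚ) ≠ 0 := by positivity
      have p9 : (Nat.factorial (w+t+s') : ℚ) ≠ 0 := by positivity
      have p10 : (Nat.factorial (b+w+t+s') : ℚ) ≠ 0 := by positivity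
      have p11 : (Nat.factorial (b+w) : ℚ) ≠ 0 := by positivity
      have p12 : (Nat.factorial (s'+σ+t) : ℚ) ≠ 0 := by positivity
      field_simp

lemma ID3_diag (b c t : ℕ) (hb : 1 ≤ b) (hc : 1 ≤ c) (ht : 1 ≤ t) :
    bQ b c t t * Cfun b c t t = 1 := by
  rw [Cfun, if_pos (by omega), bQ]
  rw [show b + t - t - 1 = b - 1 by omega, show t - t = 0 by omega,
    show b + t - t = b by omega]
  have p1 : (Nat.factorial (t-1) : ℚ) ≠ 0 := by positivity
  have p2 : (Nat.factorial (b+t-1) : ℚ) ≠ 0 := by positivity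
  have p3 : (Nat.factorial (c+t-1) : ℚ) ≠ 0 := by positivity
  have p4 : (Nat.factorial (b-1) : ℚ) ≠ 0 := by positivity
  have p5 : (Nat.factorial (b+c+t-1) : ℚ) ≠ 0 := by positivity
  have p6 : (Nat.factorial b : ℚ) ≠ 0 := by positivity
  simp only [Nat.factorial_zero]
  push_cast
  field_simp

lemma ID3_term (b c w s r N : ℕ) (hb : 1 ≤ b) (hc : 1 ≤ c) (hN : s + r = N) (hN1 : 1 ≤ N) :
    bQ b c (w+1+s) (w+1) * Cfun b c (w+1+s) (w+1+N)
      = (Nat.factorial b * Nat.factorial (c+w) * Nat.factorial (w+N) : ℚ) /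
          (Nat.factorial (b-1) * Nat.factorial w * Nat.factorial (c+w+N) * N)
        * ((-1:ℚ)^s * (N.choose s) * ((b-1+s).choose (N-1))) := by
  subst hN
  by_cases hg : r ≤ b
  case neg =>
    rw [Cfun_zero (by omega), Nat.choose_eq_zero_of_lt (show b-1+s < s+r-1 by omega)]
    push_cast
    ring
  case pos =>
    obtain ⟨β, rfl⟩ : ∃ β, b = r + β := ⟨b - r, by omega⟩
    rcases r with _ | r'
    · -- r = 0 : j = t, s = N ≥ 1
      obtain ⟨s', rfl⟩ : ∃ s', s = s' + 1 := ⟨s - 1, by omega⟩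
      obtain ⟨β', rfl⟩ : ∃ β', β = β' + 1 := ⟨β - 1, by omega⟩
      rw [Cfun, if_pos (by omega), bQ]
      rw [show w+1+(s'+1)-(w+1) = s'+1 by omega,
        show 0+(β'+1)+(w+1+(s'+1))-1 = β'+w+s'+2 by omega,
        show c+(w+1)-1 = c+w by omega,
        show 0+(β'+1)+(w+1+(s'+1))-(w+1)-1 = β'+s'+1 by omega,
        show 0+(β'+1)-1 = β' by omega,
        show w+1-1 = w by omega,
        show 0+(β'+1)+c+(w+1+(s'+1))-1 = β'+c+w+s'+2 by omega,
        show w+1+(s'+1+0)-1 = w+s'+1 by omega,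
        show c+(w+1+(s'+1+0))-1 = c+w+s'+1 by omega,
        show w+1+(s'+1+0)-(w+1+(s'+1)) = 0 by omega,
        show 0+(β'+1)+(w+1+(s'+1))-(w+1+(s'+1+0)) = β'+1 by omega,
        show 0+(β'+1) = β'+1 by omega, show s'+1+0 = s'+1 by omega,
        show w+(s'+1) = w+s'+1 by omega, show c+w+(s'+1) = c+w+s'+1 by omega,
        show β'+(s'+1) = β'+s'+1 by omega, show s'+1-1 = s' by omega]
      rw [Nat.choose_self, Nat.cast_choose ℚ (show s' ≤ β'+s'+1 by omega)]
      rw [show β'+s'+1-s' = β'+1 by omega,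
        show ((s'+1 : ℕ) : ℚ) = ((s':ℚ)+1) by push_cast; ring]
      rw [show (Nat.factorial (s'+1) : ℚ) = ((s':ℚ)+1) * Nat.factorial s' by
          rw [Nat.factorial_succ]; push_cast; ring]
      have p1 : (Nat.factorial s' : ℚ) ≠ 0 := by positivity
      have p2 : (Nat.factorial w : ℚ) ≠ 0 := by positivity
      have p3 : (Nat.factorial β' : ℚ) ≠ 0 := by positivity
      have p4 : (Nat.factorial (β'+1) : ℚ) ≠ 0 := by positivity
      have p5 : (Nat.factorial (c+w+s'+1) : ℚ) ≠ 0 := by positivity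
      have p6 : (Nat.factorial (β'+s'+1) : ℚ) ≠ 0 := by positivity
      have p7 : ((s' : ℚ)+1) ≠ 0 := by positivity
      field_simp
      ring
    · -- r = r' + 1
      rw [Cfun, if_pos (by omega), bQ]
      rw [show w+1+s-(w+1) = s by omega,
        show r'+1+β+(w+1+s)-1 = r'+β+w+s+1 by omega,
        show c+(w+1)-1 = c+w by omega,
        show r'+1+β+(w+1+s)-(w+1)-1 = r'+β+s by omega,
        show r'+1+β-1 = r'+β by omega,
        show w+1-1 = w by omega,
        show r'+1+β+c+(w+1+s)-1 = r'+β+c+w+s+1 by omega,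
        show w+1+(s+(r'+1))-1 = w+s+r'+1 by omega,
        show c+(w+1+(s+(r'+1)))-1 = c+w+s+r'+1 by omega,
        show w+1+(s+(r'+1))-(w+1+s) = r'+1 by omega,
        show r'+1+β+(w+1+s)-(w+1+(s+(r'+1))) = β by omega,
        show w+(s+(r'+1)) = w+s+r'+1 by omega,
        show c+w+(s+(r'+1)) = c+w+s+r'+1 by omega,
        show s+(r'+1)-1 = s+r' by omega]
      rw [Nat.cast_choose ℚ (show s ≤ s+(r'+1) by omega),
        Nat.cast_choose ℚ (show s+r' ≤ r'+β+s by omega)]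
      rw [show s+(r'+1)-s = r'+1 by omega, show r'+β+s-(s+r') = β by omega,
        show ((s+(r'+1) : ℕ) : ℚ) = ((s:ℚ)+r'+1) by push_cast; ring]
      rw [show (Nat.factorial (s+(r'+1)) : ℚ) = ((s:ℚ)+r'+1) * Nat.factorial (s+r') by
          rw [show s+(r'+1) = (s+r')+1 by omega, Nat.factorial_succ]; push_cast; ring,
        show (Nat.factorial (r'+1) : ℚ) = ((r':ℚ)+1) * Nat.factorial r' by
          rw [Nat.factorial_succ]; push_cast; ring,
        show (Nat.factorial (r'+1+β) : ℚ) = ((r':ℚ)+β+1) * Nat.factorial (r'+β) by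
          rw [show r'+1+β = (r'+β)+1 by omega, Nat.factorial_succ]; push_cast; ring]
      have p1 : (Nat.factorial s : ℚ) ≠ 0 := by positivity
      have p2 : (Nat.factorial w : ℚ) ≠ 0 := by positivity
      have p3 : (Nat.factorial r' : ℚ) ≠ 0 := by positivity
      have p4 : (Nat.factorial β : ℚ) ≠ 0 := by positivity
      have p5 : (Nat.factorial (r'+β) : ℚ) ≠ 0 := by positivity
      have p6 : (Nat.factorial (s+r') : ℚ) ≠ 0 := by positivity
      have p7 : (Nat.factorial (c+w) : ℚ) ≠ 0 := by positivity
      have p8 : (Nat.factorial (c+w+s+r'+1) : ℚ) ≠ 0 := by positivity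
      have p9 : (Nat.factorial (r'+β+s) : ℚ) ≠ 0 := by positivity
      have p10 : (Nat.factorial (w+s+r'+1) : ℚ) ≠ 0 := by positivity
      have p11 : (Nat.factorial (r'+β+w+s+1) : ℚ) ≠ 0 := by positivity
      have p12 : (Nat.factorial (r'+β+c+w+s+1) : ℚ) ≠ 0 := by positivity
      have p13 : ((s:ℚ)+r'+1) ≠ 0 := by positivity
      have p14 : ((r':ℚ)+1) ≠ 0 := by positivity
      have p15 : ((r':ℚ)+β+1) ≠ 0 := by positivity
      field_simp


lemma Dfun_eq (b c : ℕ) (n m : ℤ) (i : ℕ) :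
    Dfun b c n m i = ∑ v ∈ Icc 1 i, dQ b c i v * ibinom n (m - v) := rfl

lemma Bfun_eq (b c : ℕ) (n' m' : ℤ) (j : ℕ) :
    Bfun b c n' m' j = ∑ v ∈ Icc 1 j, bQ b c j v * ibinom n' (v - m') := rfl

lemma ID2 (b c u i : ℕ) (hb : 1 ≤ b) (hc : 1 ≤ c) (hu : 1 ≤ u) (hui : u ≤ i) :
    ∑ k ∈ Icc u i, Afun b c i k * dQ b c k u = if u = i then 1 else 0 := by
  rcases eq_or_lt_of_le hui with rfl | hlt
  · rw [Finset.Icc_self, Finset.sum_singleton, if_pos rfl, ID2_diag b c u hb hc hu]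
  · rw [if_neg (by omega)]
    obtain ⟨w, rfl⟩ : ∃ w, u = w + 1 := ⟨u - 1, by omega⟩
    obtain ⟨N, rfl⟩ : ∃ N, i = w + 1 + N := ⟨i - (w + 1), by omega⟩
    have hN1 : 1 ≤ N := by omega
    rw [← Finset.Ico_add_one_right_eq_Icc, Finset.sum_Ico_eq_sum_range,
      show w + 1 + N + 1 - (w + 1) = N + 1 by omega]
    have hterm : ∀ t ∈ range (N + 1),
        Afun b c (w+1+N) (w+1+t) * dQ b c (w+1+t) (w+1)
          = (Nat.factorial c * Nat.factorial (w+N) * Nat.factorial (b+w) : ℚ) /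
              (Nat.factorial (b+w+N) * Nat.factorial (c-1) * Nat.factorial w * N)
            * ((-1:ℚ)^t * (N.choose t) * ((c-1+t).choose (N-1))) := by
      intro t ht
      rw [Finset.mem_range] at ht
      exact ID2_term b c w t (N - t) N hb hc (by omega) hN1
    rw [Finset.sum_congr rfl hterm, ← Finset.mul_sum, altsum N (N-1) (c-1) (by omega), mul_zero]

lemma ID3 (b c u t : ℕ) (hb : 1 ≤ b) (hc : 1 ≤ c) (hu : 1 ≤ u) (hut : u ≤ t) :
    ∑ j ∈ Icc u t, bQ b c j u * Cfun b c j t = if u = t then 1 else 0 := by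
  rcases eq_or_lt_of_le hut with rfl | hlt
  · rw [Finset.Icc_self, Finset.sum_singleton, if_pos rfl, ID3_diag b c u hb hc hu]
  · rw [if_neg (by omega)]
    obtain ⟨w, rfl⟩ : ∃ w, u = w + 1 := ⟨u - 1, by omega⟩
    obtain ⟨N, rfl⟩ : ∃ N, t = w + 1 + N := ⟨t - (w + 1), by omega⟩
    have hN1 : 1 ≤ N := by omega
    rw [← Finset.Ico_add_one_right_eq_Icc, Finset.sum_Ico_eq_sum_range,
      show w + 1 + N + 1 - (w + 1) = N + 1 by omega]
    have hterm : ∀ s ∈ range (N + 1),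
        bQ b c (w+1+s) (w+1) * Cfun b c (w+1+s) (w+1+N)
          = (Nat.factorial b * Nat.factorial (c+w) * Nat.factorial (w+N) : ℚ) /
              (Nat.factorial (b-1) * Nat.factorial w * Nat.factorial (c+w+N) * N)
            * ((-1:ℚ)^s * (N.choose s) * ((b-1+s).choose (N-1))) := by
      intro s hs
      rw [Finset.mem_range] at hs
      exact ID3_term b c w s (N - s) N hb hc (by omega) hN1
    rw [Finset.sum_congr rfl hterm, ← Finset.mul_sum, altsum N (N-1) (b-1) (by omega), mul_zero]

lemma sum_swap_tri (a : ℕ) (F : ℕ → ℕ → ℚ) :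
    ∑ v ∈ Icc 1 a, ∑ u ∈ Icc 1 v, F v u = ∑ u ∈ Icc 1 a, ∑ v ∈ Icc u a, F v u := by
  rw [Finset.sum_sigma', Finset.sum_sigma']
  refine Finset.sum_nbij' (fun p => ⟨p.2, p.1⟩) (fun p => ⟨p.2, p.1⟩) ?_ ?_ ?_ ?_ ?_ <;>
    (try intro p hp) <;>
    simp_all [Finset.mem_sigma, Finset.mem_Icc] <;> omega

lemma E2 (a b c : ℕ) (n m : ℤ) (hb : 1 ≤ b) (hc : 1 ≤ c) (i : ℕ)
    (hi1 : 1 ≤ i) (hia : i ≤ a) :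
    ∑ v ∈ Icc 1 a, Afun b c i v * Dfun b c n m v = ibinom n (m - i) := by
  have step1 : ∑ v ∈ Icc 1 a, Afun b c i v * Dfun b c n m v
      = ∑ v ∈ Icc 1 a, ∑ u ∈ Icc 1 v, Afun b c i v * (dQ b c v u * ibinom n (m - u)) := by
    refine Finset.sum_congr rfl fun v _ => ?_
    rw [Dfun_eq, Finset.mul_sum]
  rw [step1, sum_swap_tri a (fun v u => Afun b c i v * (dQ b c v u * ibinom n (m - u)))]
  have step2 : ∀ u ∈ Icc 1 a,
      ∑ v ∈ Icc u a, Afun b c i v * (dQ b c v u * ibinom n (m - u))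
        = (if u = i then 1 else 0) * ibinom n (m - u) := by
    intro u hu
    rw [Finset.mem_Icc] at hu
    have hrw : ∑ v ∈ Icc u a, Afun b c i v * (dQ b c v u * ibinom n (m - u))
        = (∑ v ∈ Icc u a, Afun b c i v * dQ b c v u) * ibinom n (m - u) := by
      rw [Finset.sum_mul]
      exact Finset.sum_congr rfl fun v _ => by ring
    rw [hrw]
    congr 1
    by_cases hui : u ≤ i
    · rw [← ID2 b c u i hb hc hu.1 hui]
      symm
      apply Finset.sum_subset
      · intro x hx; rw [Finset.mem_Icc] at *; omega
      · intro x hx hx'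
        rw [Finset.mem_Icc] at hx
        rw [Finset.mem_Icc] at hx'
        rw [Afun_zero (by omega)]
        ring
    · rw [if_neg (by omega)]
      apply Finset.sum_eq_zero
      intro v hv
      rw [Finset.mem_Icc] at hv
      rw [Afun_zero (by omega)]
      ring
  rw [Finset.sum_congr rfl step2]
  simp only [ite_mul, one_mul, zero_mul]
  rw [Finset.sum_ite_eq' (Icc 1 a) i (fun u => ibinom n (m - u)), if_pos (by simp; omega)]

lemma E3 (a b c : ℕ) (n' m' : ℤ) (hb : 1 ≤ b) (hc : 1 ≤ c) (j : ℕ)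
    (hj1 : 1 ≤ j) (hja : j ≤ a) :
    ∑ v ∈ Icc 1 a, Bfun b c n' m' v * Cfun b c v j = ibinom n' (j - m') := by
  have step1 : ∑ v ∈ Icc 1 a, Bfun b c n' m' v * Cfun b c v j
      = ∑ v ∈ Icc 1 a, ∑ u ∈ Icc 1 v, (bQ b c v u * ibinom n' (u - m')) * Cfun b c v j := by
    refine Finset.sum_congr rfl fun v _ => ?_
    rw [Bfun_eq, Finset.sum_mul]
  rw [step1, sum_swap_tri a (fun v u => (bQ b c v u * ibinom n' (u - m')) * Cfun b c v j)]
  have step2 : ∀ u ∈ Icc 1 a,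
      ∑ v ∈ Icc u a, (bQ b c v u * ibinom n' (u - m')) * Cfun b c v j
        = (if u = j then 1 else 0) * ibinom n' (u - m') := by
    intro u hu
    rw [Finset.mem_Icc] at hu
    have hrw : ∑ v ∈ Icc u a, (bQ b c v u * ibinom n' (u - m')) * Cfun b c v j
        = (∑ v ∈ Icc u a, bQ b c v u * Cfun b c v j) * ibinom n' (u - m') := by
      rw [Finset.sum_mul]
      exact Finset.sum_congr rfl fun v _ => by ring
    rw [hrw]
    congr 1
    by_cases huj : u ≤ j
    · rw [← ID3 b c u j hb hc hu.1 huj]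
      symm
      apply Finset.sum_subset
      · intro x hx; rw [Finset.mem_Icc] at *; omega
      · intro x hx hx'
        rw [Finset.mem_Icc] at hx
        rw [Finset.mem_Icc] at hx'
        rw [Cfun_zero (by omega)]
        ring
    · rw [if_neg (by omega)]
      apply Finset.sum_eq_zero
      intro v hv
      rw [Finset.mem_Icc] at hv
      rw [Cfun_zero (by omega)]
      ring
  rw [Finset.sum_congr rfl step2]
  simp only [ite_mul, one_mul, zero_mul]
  rw [Finset.sum_ite_eq' (Icc 1 a) j (fun u => ibinom n' (u - m')), if_pos (by simp; omega)]


lemma Afun_diag (b c i : ℕ) (hc : 1 ≤ c) (hi : 1 ≤ i) : Afun b c i i = 1 := by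
  rw [Afun, if_pos (by omega), show i - i = 0 by omega, show c + i - i = c by omega]
  have p1 : (Nat.factorial (i-1) : ℚ) ≠ 0 := by positivity
  have p2 : (Nat.factorial (b+i-1) : ℚ) ≠ 0 := by positivity
  have p3 : (Nat.factorial c : ℚ) ≠ 0 := by positivity
  simp only [Nat.factorial_zero]
  field_simp
  ring

lemma Cfun_diag (b c i : ℕ) (hb : 1 ≤ b) (hi : 1 ≤ i) :
    Cfun b c i i = (Nat.factorial (i - 1) * Nat.factorial (b + c + i - 1) : ℚ) /
      (Nat.factorial (b + i - 1) * Nat.factorial (c + i - 1)) := by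
  rw [Cfun, if_pos (by omega), show i - i = 0 by omega, show b + i - i = b by omega]
  have p1 : (Nat.factorial b : ℚ) ≠ 0 := by positivity
  have p2 : (Nat.factorial (b + i - 1) : ℚ) ≠ 0 := by positivity
  have p3 : (Nat.factorial (c + i - 1) : ℚ) ≠ 0 := by positivity
  simp only [Nat.factorial_zero]
  field_simp
  ring

lemma prod_shift (y b : ℕ) :
    ∏ j ∈ Icc 1 b, ((y : ℚ) + j) = (Nat.factorial (y + b) : ℚ) / Nat.factorial y := by
  induction b with
  | zero => simp [div_self (show (Nat.factorial y : ℚ) ≠ 0 by positivity)]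
  | succ b ih =>
    rw [Finset.prod_Icc_succ_top (by omega), ih,
      show y + (b + 1) = (y + b) + 1 by omega, Nat.factorial_succ]
    have p1 : (Nat.factorial y : ℚ) ≠ 0 := by positivity
    push_cast
    field_simp
    ring

lemma telescope_k (x c : ℕ) (hx : 2 ≤ x) :
    ∏ k ∈ Icc 1 c, (((x : ℚ) + k - 1) / ((x : ℚ) + k - 2))
      = ((x : ℚ) + c - 1) / ((x : ℚ) - 1) := by
  induction c with
  | zero =>
    rw [show Icc 1 0 = (∅ : Finset ℕ) from rfl, Finset.prod_empty]
    have h1 : (x : ℚ) - 1 ≠ 0 := by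
      have : (2 : ℚ) ≤ (x : ℚ) := by exact_mod_cast hx
      linarith
    rw [show ((x : ℚ) + ↑(0:ℕ) - 1) = (x : ℚ) - 1 by push_cast; ring, div_self h1]
  | succ c ih =>
    rw [Finset.prod_Icc_succ_top (by omega), ih,
      show ((x : ℚ) + ↑(c+1) - 2) = (x : ℚ) + ↑c - 1 by push_cast; ring]
    have h1 : (x : ℚ) - 1 ≠ 0 := by
      have : (2 : ℚ) ≤ (x : ℚ) := by exact_mod_cast hx
      linarith
    have h2 : (x : ℚ) + c - 1 ≠ 0 := by
      have h3 : (2 : ℚ) ≤ (x : ℚ) := by exact_mod_cast hx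
      have h4 : (0 : ℚ) ≤ (c : ℚ) := by positivity
      linarith
    field_simp

lemma macmahon_per_i (b c i : ℕ) (hb : 1 ≤ b) (hc : 1 ≤ c) (hi : 1 ≤ i) :
    ∏ j ∈ Icc 1 b, ∏ k ∈ Icc 1 c, (((i : ℚ) + j + k - 1) / ((i : ℚ) + j + k - 2))
      = (Nat.factorial (i - 1) * Nat.factorial (b + c + i - 1) : ℚ) /
        (Nat.factorial (b + i - 1) * Nat.factorial (c + i - 1)) := by
  have hinner : ∀ j ∈ Icc 1 b, ∏ k ∈ Icc 1 c, (((i : ℚ) + j + k - 1) / ((i : ℚ) + j + k - 2))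
      = (((c + i - 1 : ℕ) : ℚ) + j) / (((i - 1 : ℕ) : ℚ) + j) := by
    intro j hj
    rw [Finset.mem_Icc] at hj
    have := telescope_k (i + j) c (by omega)
    have hcongr : ∀ k ∈ Icc 1 c, (((i : ℚ) + j + k - 1) / ((i : ℚ) + j + k - 2))
        = ((((i + j : ℕ) : ℚ) + k - 1) / (((i + j : ℕ) : ℚ) + k - 2)) := by
      intro k _; push_cast; ring_nf
    rw [Finset.prod_congr rfl hcongr, this]
    have e1 : ((i + j : ℕ) : ℚ) + c - 1 = ((c + i - 1 : ℕ) : ℚ) + j := by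
      have : 1 ≤ c + i := by omega
      push_cast [Nat.cast_sub (show 1 ≤ c + i by omega)]
      ring
    have e2 : ((i + j : ℕ) : ℚ) - 1 = ((i - 1 : ℕ) : ℚ) + j := by
      push_cast [Nat.cast_sub hi]
      ring
    rw [e1, e2]
  rw [Finset.prod_congr rfl hinner, Finset.prod_div_distrib, prod_shift, prod_shift]
  rw [show c + i - 1 + b = b + c + i - 1 by omega, show i - 1 + b = b + i - 1 by omega]
  have p1 : (Nat.factorial (c + i - 1) : ℚ) ≠ 0 := by positivity
  have p2 : (Nat.factorial (i - 1) : ℚ) ≠ 0 := by positivity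
  have p3 : (Nat.factorial (b + i - 1) : ℚ) ≠ 0 := by positivity
  have p4 : (Nat.factorial (b + c + i - 1) : ℚ) ≠ 0 := by positivity
  field_simp

lemma macmahon_eq_prod (a b c : ℕ) (hb : 1 ≤ b) (hc : 1 ≤ c) :
    macmahon a b c = ∏ i ∈ Icc 1 a, Cfun b c i i := by
  rw [macmahon]
  refine Finset.prod_congr rfl fun i hi => ?_
  rw [Finset.mem_Icc] at hi
  rw [macmahon_per_i b c i hb hc hi.1, Cfun_diag b c i hb hi.1]

noncomputable def Lent (a b c : ℕ) (n' m' : ℤ) (i j : ℕ) : ℚ :=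
  if i < a then (if j < a then Afun b c (i+1) (j+1) else 0)
  else (if j < a then Bfun b c n' m' (j+1) else 1)

noncomputable def Uent (a b c : ℕ) (n m : ℤ) (S : ℚ) (i j : ℕ) : ℚ :=
  if i < a then (if j < a then Cfun b c (i+1) (j+1) else Dfun b c n m (i+1))
  else (if j < a then 0 else S)

lemma sum_Icc_one' (j : ℕ) (f : ℕ → ℚ) : ∑ v ∈ Icc 1 j, f v = ∑ t ∈ range j, f (t + 1) := by
  rw [← Finset.Ico_add_one_right_eq_Icc, Finset.sum_Ico_eq_sum_range]
  refine Finset.sum_congr (by norm_num) fun t _ => by rw [Nat.add_comm]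

lemma prod_Icc_one (j : ℕ) (f : ℕ → ℚ) : ∏ v ∈ Icc 1 j, f v = ∏ t ∈ range j, f (t + 1) := by
  rw [← Finset.Ico_add_one_right_eq_Icc, Finset.prod_Ico_eq_prod_range]
  refine Finset.prod_congr (by norm_num) fun t _ => by rw [Nat.add_comm]



/-- the determinant of the lattice path matrix equals MacMahon's
product times `binom(n+n'-b-c, m-m'-c) - ∑_{v=1}^{a} B(v) D(v)`. -/
theorem statement_6 (a b c : ℕ) (ha : 0 < a) (hb : 0 < b) (hc : 0 < c) (m n m' n' : ℤ) :
    (Matrix.of fun i j : Fin (a + 1) =>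
      if (i : ℕ) < a then
        if (j : ℕ) < a then ibinom ((b : ℤ) + c) ((c : ℤ) + ((j : ℕ) + 1) - ((i : ℕ) + 1))
        else ibinom n (m - ((i : ℕ) + 1))
      else
        if (j : ℕ) < a then ibinom n' ((((j : ℕ) : ℤ) + 1) - m')
        else ibinom (n + n' - b - c) (m - m' - c)).det
    = macmahon a b c *
        (ibinom (n + n' - b - c) (m - m' - c)
          - ∑ v ∈ Finset.Icc 1 a, Bfun b c n' m' v * Dfun b c n m v) := by
  set S : ℚ := ibinom (n + n' - b - c) (m - m' - c)
      - ∑ v ∈ Finset.Icc 1 a, Bfun b c n' m' v * Dfun b c n m v with hS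
  set L : Matrix (Fin (a+1)) (Fin (a+1)) ℚ :=
    Matrix.of fun i j : Fin (a+1) => Lent a b c n' m' i j with hL
  set U : Matrix (Fin (a+1)) (Fin (a+1)) ℚ :=
    Matrix.of fun i j : Fin (a+1) => Uent a b c n m S i j with hU
  have hMLU : (Matrix.of fun i j : Fin (a + 1) =>
      if (i : ℕ) < a then
        if (j : ℕ) < a then ibinom ((b : ℤ) + c) ((c : ℤ) + ((j : ℕ) + 1) - ((i : ℕ) + 1))
        else ibinom n (m - ((i : ℕ) + 1))
      else
        if (j : ℕ) < a then ibinom n' ((((j : ℕ) : ℤ) + 1) - m')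
        else ibinom (n + n' - b - c) (m - m' - c)) = L * U := by
    ext i j
    rw [Matrix.mul_apply]
    have hconv : ∑ v : Fin (a+1), L i v * U v j
        = ∑ v ∈ range (a+1), Lent a b c n' m' i v * Uent a b c n m S v j :=
      Fin.sum_univ_eq_sum_range (fun v => Lent a b c n' m' i v * Uent a b c n m S v j) (a+1)
    rw [Matrix.of_apply, hconv, Finset.sum_range_succ]
    by_cases hi : (i : ℕ) < a
    · by_cases hj : (j : ℕ) < a
      · rw [if_pos hi, if_pos hj]
        rw [show Lent a b c n' m' i a * Uent a b c n m S a j = 0 by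
          rw [Lent, if_pos hi, if_neg (by omega)]; ring]
        rw [add_zero]
        have hterm : ∀ v ∈ range a,
            Lent a b c n' m' i v * Uent a b c n m S v j
              = Afun b c (i+1) (v+1) * Cfun b c (v+1) (j+1) := by
          intro v hv
          rw [Finset.mem_range] at hv
          rw [Lent, Uent, if_pos hi, if_pos hv, if_pos hv, if_pos hj]
        rw [Finset.sum_congr rfl hterm, ← sum_Icc_one' a (fun v => Afun b c (i+1) v * Cfun b c v (j+1))]
        have hsub : ∑ v ∈ Icc 1 a, Afun b c ((i:ℕ)+1) v * Cfun b c v ((j:ℕ)+1)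
            = ∑ v ∈ Icc 1 ((j:ℕ)+1), Afun b c ((i:ℕ)+1) v * Cfun b c v ((j:ℕ)+1) := by
          symm
          apply Finset.sum_subset
          · intro x hx; rw [Finset.mem_Icc] at *; omega
          · intro x hx hx'
            rw [Finset.mem_Icc] at hx hx'
            rw [Cfun_zero (by omega)]
            ring
        rw [hsub, ID1 b c hb hc ((j:ℕ)+1) (by omega) ((i:ℕ)+1) (by omega)]
        congr 1 <;> push_cast <;> ring
      · rw [if_pos hi, if_neg hj]
        rw [show Lent a b c n' m' i a * Uent a b c n m S a j = 0 by
          rw [Lent, if_pos hi, if_neg (by omega)]; ring]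
        rw [add_zero]
        have hterm : ∀ v ∈ range a,
            Lent a b c n' m' i v * Uent a b c n m S v j
              = Afun b c (i+1) (v+1) * Dfun b c n m (v+1) := by
          intro v hv
          rw [Finset.mem_range] at hv
          rw [Lent, Uent, if_pos hi, if_pos hv, if_pos hv, if_neg hj]
        rw [Finset.sum_congr rfl hterm,
          ← sum_Icc_one' a (fun v => Afun b c (i+1) v * Dfun b c n m v),
          E2 a b c n m hb hc ((i:ℕ)+1) (by omega) (by omega)]
        congr 1 <;> push_cast <;> ring
    · by_cases hj : (j : ℕ) < a
      · rw [if_neg hi, if_pos hj]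
        rw [show Lent a b c n' m' i a * Uent a b c n m S a j = 0 by
          rw [Uent, if_neg (by omega), if_pos hj]; ring]
        rw [add_zero]
        have hterm : ∀ v ∈ range a,
            Lent a b c n' m' i v * Uent a b c n m S v j
              = Bfun b c n' m' (v+1) * Cfun b c (v+1) (j+1) := by
          intro v hv
          rw [Finset.mem_range] at hv
          rw [Lent, Uent, if_neg hi, if_pos hv, if_pos hv, if_pos hj]
        rw [Finset.sum_congr rfl hterm,
          ← sum_Icc_one' a (fun v => Bfun b c n' m' v * Cfun b c v (j+1)),
          E3 a b c n' m' hb hc ((j:ℕ)+1) (by omega) (by omega)]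
        congr 1 <;> push_cast <;> ring
      · rw [if_neg hi, if_neg hj]
        rw [show Lent a b c n' m' i a * Uent a b c n m S a j = S by
          rw [Lent, Uent, if_neg (by omega), if_neg (by omega), if_neg (by omega),
            if_neg (by omega)]; ring]
        have hterm : ∀ v ∈ range a,
            Lent a b c n' m' i v * Uent a b c n m S v j
              = Bfun b c n' m' (v+1) * Dfun b c n m (v+1) := by
          intro v hv
          rw [Finset.mem_range] at hv
          rw [Lent, Uent, if_neg hi, if_pos hv, if_pos hv, if_neg hj]
        rw [Finset.sum_congr rfl hterm,
          ← sum_Icc_one' a (fun v => Bfun b c n' m' v * Dfun b c n m v)]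
        rw [hS]
        ring
  rw [hMLU, Matrix.det_mul]
  have hdetL : L.det = 1 := by
    have hlt : L.BlockTriangular OrderDual.toDual := by
      intro x y hxy
      have hxy' : (x : ℕ) < (y : ℕ) := hxy
      rw [hL, Matrix.of_apply, Lent]
      by_cases hx : (x : ℕ) < a
      · by_cases hy : (y : ℕ) < a
        · rw [if_pos hx, if_pos hy, Afun_zero (by omega)]
        · rw [if_pos hx, if_neg hy]
      · exfalso
        have := y.isLt
        omega
    rw [Matrix.det_of_lowerTriangular L hlt, Fin.prod_univ_castSucc]
    have hlast : L (Fin.last a) (Fin.last a) = 1 := by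
      rw [hL, Matrix.of_apply, Lent]
      simp
    rw [hlast, mul_one]
    apply Finset.prod_eq_one
    intro x _
    rw [hL, Matrix.of_apply, Lent]
    have hx : ((x.castSucc : Fin (a+1)) : ℕ) < a := x.isLt
    rw [if_pos hx, if_pos hx, Afun_diag b c _ hc (by omega)]
  have hdetU : U.det = (∏ v ∈ Icc 1 a, Cfun b c v v) * S := by
    have hut : U.BlockTriangular id := by
      intro x y hxy
      have hxy' : (y : ℕ) < (x : ℕ) := hxy
      rw [hU, Matrix.of_apply, Uent]
      by_cases hx : (x : ℕ) < a
      · rw [if_pos hx, if_pos (by omega), Cfun_zero (by omega)]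
      · rw [if_neg hx, if_pos (by omega)]
    rw [Matrix.det_of_upperTriangular hut, Fin.prod_univ_castSucc]
    have hlast : U (Fin.last a) (Fin.last a) = S := by
      rw [hU, Matrix.of_apply, Uent]
      simp
    rw [hlast]
    congr 1
    have hterm : ∀ x : Fin a, U x.castSucc x.castSucc = Cfun b c ((x:ℕ)+1) ((x:ℕ)+1) := by
      intro x
      rw [hU, Matrix.of_apply, Uent]
      have hx : ((x.castSucc : Fin (a+1)) : ℕ) < a := x.isLt
      rw [if_pos hx, if_pos hx, Fin.coe_castSucc]
    rw [Finset.prod_congr rfl (fun x _ => hterm x),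
      Fin.prod_univ_eq_prod_range (fun t => Cfun b c (t+1) (t+1)) a,
      ← prod_Icc_one a (fun v => Cfun b c v v)]
  rw [hdetL, hdetU, one_mul, macmahon_eq_prod a b c hb hc, hS]
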